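/- Let $h : \mathbb{R}^n \to \mathbb{R}$ be differentiable with $L_3$-Lipschitz gradient, and let $Y : [0, s] \to \mathbb{R}^n$ be a curve with $Y(0) = x$, and suppose there exist $L_1, L_2 > 0$ with $\|Y(t) - Y(0)\| \le L_1 t \|Y'(0)\|$ and $\|Y(t) - Y(0) - t Y'(0)\| \le L_2 t^2 \|Y'(0)\|^2$ for all $t \in [0,s]$. If moreover $\langle \nabla h(Y(0)), Y'(0)\rangle = -\|Y'(0)\|^2$, then for all $t \in [0,s]$: $h(Y(t)) \le h(Y(0)) - \big(t - L_2 t^2 \|\nabla h(Y(0))\| - \frac{L_3 L_1^2}{2} t^2\big) \|Y'(0)\|^2$. -/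

import Mathlib

open InnerProductSpace intervalIntegral

lemma descent_lemma {E : Type*} [NormedAddCommGroup E] [InnerProductSpace ℝ E] [CompleteSpace E]
    (h : E → ℝ) (g : E → E) (hgrad : ∀ x, HasGradientAt h (g x) x)
    (L3 : ℝ) (hL3 : 0 ≤ L3) (hlip : ∀ x y, ‖g x - g y‖ ≤ L3 * ‖x - y‖)
    (x y : E) : h y ≤ h x + inner ℝ (g x) (y - x) + L3 / 2 * ‖y - x‖ ^ 2 := by
  set v := y - x with hv
  have hgc : Continuous g := by
    refine (LipschitzWith.of_dist_le_mul (K := L3.toNNReal) fun a b => ?_).continuous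
    rw [dist_eq_norm, dist_eq_norm, Real.coe_toNNReal L3 hL3]
    exact hlip a b
  have hc : Continuous fun t : ℝ => x + t • v := by continuity
  have hderiv : ∀ t : ℝ, HasDerivAt (fun u : ℝ => h (x + u • v))
      (inner ℝ (g (x + t • v)) v) t := by
    intro t
    have hcd : HasDerivAt (fun u : ℝ => x + u • v) v t := by
      simpa using ((hasDerivAt_id t).smul_const v).const_add x
    have := (hgrad (x + t • v)).hasFDerivAt.comp_hasDerivAt t hcd
    exact this
  have hcont : Continuous fun t : ℝ => (inner ℝ (g (x + t • v)) v : ℝ) :=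
    (hgc.comp hc).inner continuous_const
  have heq : ∫ t in (0:ℝ)..1, (inner ℝ (g (x + t • v)) v : ℝ)
      = h y - h x := by
    rw [integral_eq_sub_of_hasDerivAt (fun t _ => hderiv t)
      (hcont.intervalIntegrable 0 1)]
    simp [hv]
  have hbound : ∫ t in (0:ℝ)..1, (inner ℝ (g (x + t • v)) v : ℝ)
      ≤ ∫ t in (0:ℝ)..1, ((inner ℝ (g x) v : ℝ) + L3 * ‖v‖ ^ 2 * t) := by
    apply integral_mono_on zero_le_one (hcont.intervalIntegrable 0 1)
      ((continuous_const.add (continuous_const.mul continuous_id)).intervalIntegrable 0 1)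
    intro t ht
    have e1 : (inner ℝ (g (x + t • v)) v : ℝ)
        = inner ℝ (g x) v + inner ℝ (g (x + t • v) - g x) v := by
      rw [inner_sub_left]; ring
    rw [e1]
    simp only [Pi.add_apply, Pi.mul_apply, id_eq]
    have hb : (inner ℝ (g (x + t • v) - g x) v : ℝ) ≤ L3 * ‖v‖ ^ 2 * t := by
      calc (inner ℝ (g (x + t • v) - g x) v : ℝ) ≤ ‖g (x + t • v) - g x‖ * ‖v‖ :=
            real_inner_le_norm _ _
        _ ≤ (L3 * ‖x + t • v - x‖) * ‖v‖ := by
            have := hlip (x + t • v) x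
            nlinarith [norm_nonneg v]
        _ = L3 * ‖v‖ ^ 2 * t := by
            have : ‖x + t • v - x‖ = t * ‖v‖ := by
              simp [norm_smul, abs_of_nonneg ht.1]
            rw [this]; ring
    linarith
  have hval : ∫ t in (0:ℝ)..1, ((inner ℝ (g x) v : ℝ) + L3 * ‖v‖ ^ 2 * t)
      = inner ℝ (g x) v + L3 / 2 * ‖v‖ ^ 2 := by
    rw [integral_add (intervalIntegrable_const)
      ((intervalIntegral.intervalIntegrable_id).const_mul _)]
    rw [intervalIntegral.integral_const_mul, integral_id]
    simp
    ring
  have := hbound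
  rw [heq, hval] at this
  linarith

theorem stmt_19 (n : ℕ) (h : EuclideanSpace ℝ (Fin n) → ℝ)
    (g : EuclideanSpace ℝ (Fin n) → EuclideanSpace ℝ (Fin n))
    (hgrad : ∀ x, HasGradientAt h (g x) x)
    (L3 : ℝ) (hlip : ∀ x y, ‖g x - g y‖ ≤ L3 * ‖x - y‖)
    (s : ℝ) (hs : 0 ≤ s)
    (Y : ℝ → EuclideanSpace ℝ (Fin n)) (Y'0 : EuclideanSpace ℝ (Fin n))
    (L1 L2 : ℝ) (hL1 : 0 < L1) (hL2 : 0 < L2)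
    (h1 : ∀ t ∈ Set.Icc (0 : ℝ) s, ‖Y t - Y 0‖ ≤ L1 * t * ‖Y'0‖)
    (h2 : ∀ t ∈ Set.Icc (0 : ℝ) s, ‖Y t - Y 0 - t • Y'0‖ ≤ L2 * t ^ 2 * ‖Y'0‖ ^ 2)
    (hangle : (inner ℝ (g (Y 0)) Y'0 : ℝ) = -‖Y'0‖ ^ 2) :
    ∀ t ∈ Set.Icc (0 : ℝ) s,
      h (Y t) ≤ h (Y 0)
        - (t - L2 * t ^ 2 * ‖g (Y 0)‖ - L3 * L1 ^ 2 / 2 * t ^ 2) * ‖Y'0‖ ^ 2 := by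
  intro t ht
  rcases le_or_gt 0 L3 with hL3 | hL3
  · -- main case
    have hdesc := descent_lemma h g hgrad L3 hL3 hlip (Y 0) (Y t)
    have e1 : (inner ℝ (g (Y 0)) (Y t - Y 0) : ℝ)
        = inner ℝ (g (Y 0)) (Y t - Y 0 - t • Y'0) + t * inner ℝ (g (Y 0)) Y'0 := by
      simp [inner_sub_right, inner_smul_right]
    have b1 : (inner ℝ (g (Y 0)) (Y t - Y 0 - t • Y'0) : ℝ)
        ≤ ‖g (Y 0)‖ * (L2 * t ^ 2 * ‖Y'0‖ ^ 2) := by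
      calc (inner ℝ (g (Y 0)) (Y t - Y 0 - t • Y'0) : ℝ)
          ≤ ‖g (Y 0)‖ * ‖Y t - Y 0 - t • Y'0‖ := real_inner_le_norm _ _
        _ ≤ _ := by
            have := h2 t ht
            nlinarith [norm_nonneg (g (Y 0))]
    have b2 : L3 / 2 * ‖Y t - Y 0‖ ^ 2 ≤ L3 * L1 ^ 2 / 2 * t ^ 2 * ‖Y'0‖ ^ 2 := by
      have hb := h1 t ht
      have hn : (0:ℝ) ≤ ‖Y t - Y 0‖ := norm_nonneg _
      have hsq : ‖Y t - Y 0‖ ^ 2 ≤ (L1 * t * ‖Y'0‖) ^ 2 := by nlinarith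
      nlinarith [hsq, hL3]
    rw [e1, hangle] at hdesc
    nlinarith [norm_nonneg (g (Y 0)), norm_nonneg Y'0]
  · -- degenerate: L3 < 0 forces the space to be trivial
    have htriv : ∀ a b : EuclideanSpace ℝ (Fin n), a = b := by
      intro a b
      by_contra hab
      have h0 : 0 < ‖a - b‖ := by
        rw [norm_pos_iff]; exact sub_ne_zero.mpr hab
      have := hlip a b
      nlinarith [norm_nonneg (g a - g b)]
    have hY : Y t = Y 0 := htriv _ _
    have hY0 : Y'0 = 0 := htriv _ _
    rw [hY, hY0]
    simp
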